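/- arXiv:math/0008069 — 2 statements merged into one kernel-verified Lean document; each statement's English description precedes it below -/
import Mathlib

section
/- Let A,B > 0 and a,b,c,d ∈ ℝ with a,b,c,d all positive. If f(t) := 1 − A t^a(1−t)^b − B t^c(1−t)^d has no degenerate roots in (0,1), then f has fewer than 6 roots in the open interval (0,1). -/
open Real Set

section FewerThanSixAux

open Filter Topology

private lemma rpow_split {x : ℝ} (hx : 0 < x) (p : ℝ) : x ^ p = x ^ (p - 1) * x := by
  rw [← Real.rpow_add_one hx.ne' (p - 1)]; congr 1; ring

private lemma hasDerivAt_G (p q : ℝ) {t : ℝ} (h0 : 0 < t) (h1 : t < 1) :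
    HasDerivAt (fun s : ℝ => s ^ p * (1 - s) ^ q)
      (t ^ (p - 1) * (1 - t) ^ (q - 1) * (p * (1 - t) - q * t)) t := by
  have ht1 : (0:ℝ) < 1 - t := by linarith
  have d1 : HasDerivAt (fun s : ℝ => s ^ p) (p * t ^ (p - 1)) t :=
    Real.hasDerivAt_rpow_const (Or.inl h0.ne')
  have inner : HasDerivAt (fun s : ℝ => 1 - s) (-1) t := by
    exact (hasDerivAt_id' t).const_sub 1
  have outer : HasDerivAt (fun y : ℝ => y ^ q) (q * (1 - t) ^ (q - 1)) (1 - t) :=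
    Real.hasDerivAt_rpow_const (Or.inl ht1.ne')
  have d2 : HasDerivAt (fun s : ℝ => (1 - s) ^ q) (q * (1 - t) ^ (q - 1) * (-1)) t := by
    exact outer.comp t inner
  refine (d1.mul d2).congr_deriv ?_
  rw [rpow_split h0 p, rpow_split ht1 q]
  ring

private lemma cubic_factor (k r2 r1 r0 x1 x2 x3 s : ℝ) (h12 : x1 < x2) (h23 : x2 < x3)
    (e1 : k * x1 ^ 3 + r2 * x1 ^ 2 + r1 * x1 + r0 = 0)
    (e2 : k * x2 ^ 3 + r2 * x2 ^ 2 + r1 * x2 + r0 = 0)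
    (e3 : k * x3 ^ 3 + r2 * x3 ^ 2 + r1 * x3 + r0 = 0) :
    k * s ^ 3 + r2 * s ^ 2 + r1 * s + r0 = k * (s - x1) * (s - x2) * (s - x3) := by
  have h12' : x1 - x2 ≠ 0 := by linarith
  have h23' : x2 - x3 ≠ 0 := by linarith
  have h13' : x1 - x3 ≠ 0 := by linarith
  have A1 : (x1 - x2) * ((r2 + k * (x1 + x2 + x3)) * (x1 + x2)
      + (r1 - k * (x1 * x2 + x1 * x3 + x2 * x3))) = 0 := by linear_combination e1 - e2
  have A2 : (x2 - x3) * ((r2 + k * (x1 + x2 + x3)) * (x2 + x3)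
      + (r1 - k * (x1 * x2 + x1 * x3 + x2 * x3))) = 0 := by linear_combination e2 - e3
  have B1 : (r2 + k * (x1 + x2 + x3)) * (x1 + x2)
      + (r1 - k * (x1 * x2 + x1 * x3 + x2 * x3)) = 0 :=
    (mul_eq_zero.mp A1).resolve_left h12'
  have B2 : (r2 + k * (x1 + x2 + x3)) * (x2 + x3)
      + (r1 - k * (x1 * x2 + x1 * x3 + x2 * x3)) = 0 :=
    (mul_eq_zero.mp A2).resolve_left h23'
  have C1 : (x1 - x3) * (r2 + k * (x1 + x2 + x3)) = 0 := by linear_combination B1 - B2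
  have hp : r2 + k * (x1 + x2 + x3) = 0 := (mul_eq_zero.mp C1).resolve_left h13'
  have hq : r1 - k * (x1 * x2 + x1 * x3 + x2 * x3) = 0 := by
    linear_combination B1 - (x1 + x2) * hp
  have hr : r0 + k * (x1 * x2 * x3) = 0 := by linear_combination e1 - x1 ^ 2 * hp - x1 * hq
  linear_combination s ^ 2 * hp + s * hq + hr

private lemma exists_six_mem {s : Set ℝ} (h : 6 ≤ s.encard) :
    ∃ z : Fin 6 → ℝ, StrictMono z ∧ ∀ i, z i ∈ s := by
  obtain ⟨t, hts, htc⟩ := Set.exists_subset_encard_eq h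
  have hfin : t.Finite := Set.finite_of_encard_eq_coe (by exact_mod_cast htc)
  have hcard : hfin.toFinset.card = 6 := by
    have h2 := hfin.encard_eq_coe_toFinset_card
    rw [htc] at h2
    exact_mod_cast h2.symm
  let e := hfin.toFinset.orderIsoOfFin hcard
  refine ⟨fun i => (e i : ℝ), fun i j hij => ?_, fun i => ?_⟩
  · exact_mod_cast e.strictMono hij
  · exact hts (hfin.mem_toFinset.mp (e i).2)

/-- `h` function from the Rolle chain. -/
private noncomputable def Hf (a b c d B : ℝ) : ℝ → ℝ := fun t =>
  (a + b) * t - a - B * (t ^ c * (1 - t) ^ d) * ((c - a) - (c + d - a - b) * t)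

private noncomputable def Q2 (a b c d : ℝ) : ℝ → ℝ := fun t =>
  (c * (1 - t) - d * t) * ((c - a) - (c + d - a - b) * t) - (c + d - a - b) * (t * (1 - t))

private noncomputable def H1 (a b c d B : ℝ) : ℝ → ℝ := fun t =>
  (a + b) - B * (t ^ (c - 1) * (1 - t) ^ (d - 1) * Q2 a b c d t)

private noncomputable def Q3 (a b c d : ℝ) : ℝ → ℝ := fun t =>
  ((c - 1) * (1 - t) - (d - 1) * t) * Q2 a b c d t
    + (t * (1 - t)) * (-(c + d) * ((c - a) - (c + d - a - b) * t)
        + (c * (1 - t) - d * t) * (-(c + d - a - b)) - (c + d - a - b) * (1 - 2 * t))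

private noncomputable def H2 (a b c d B : ℝ) : ℝ → ℝ := fun t =>
  -B * (t ^ (c - 2) * (1 - t) ^ (d - 2) * Q3 a b c d t)

private noncomputable def Ff (a b c d A B : ℝ) : ℝ → ℝ := fun t =>
  t ^ (-a) * (1 - t) ^ (-b) - A - B * (t ^ (c - a) * (1 - t) ^ (d - b))

private lemma hasDerivAt_Ff (a b c d A B : ℝ) {t : ℝ} (h0 : 0 < t) (h1 : t < 1) :
    HasDerivAt (Ff a b c d A B)
      (t ^ (-a - 1) * (1 - t) ^ (-b - 1) * Hf a b c d B t) t := by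
  have ht1 : (0:ℝ) < 1 - t := by linarith
  have d1 := hasDerivAt_G (-a) (-b) h0 h1
  have d2 := hasDerivAt_G (c - a) (d - b) h0 h1
  have E1 : t ^ (c - a - 1) = t ^ (-a - 1) * t ^ c := by
    rw [← Real.rpow_add h0]; congr 1; ring
  have E2 : (1 - t) ^ (d - b - 1) = (1 - t) ^ (-b - 1) * (1 - t) ^ d := by
    rw [← Real.rpow_add ht1]; congr 1; ring
  unfold Ff
  have total := (d1.sub_const A).sub (d2.const_mul B)
  refine total.congr_deriv ?_
  unfold Hf
  rw [E1, E2]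
  ring

private lemma hasDerivAt_Hf (a b c d B : ℝ) {t : ℝ} (h0 : 0 < t) (h1 : t < 1) :
    HasDerivAt (Hf a b c d B) (H1 a b c d B t) t := by
  have ht1 : (0:ℝ) < 1 - t := by linarith
  have hG := hasDerivAt_G c d h0 h1
  have hlin : HasDerivAt (fun s : ℝ => (a + b) * s - a) (a + b) t := by
    simpa using ((hasDerivAt_id t).const_mul (a + b)).sub_const a
  have hl2 : HasDerivAt (fun s : ℝ => (c - a) - (c + d - a - b) * s) (-(c + d - a - b)) t := by
    exact ((hasDerivAt_const t (c - a)).sub ((hasDerivAt_id' t).const_mul (c + d - a - b))).congr_deriv (by ring)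
  unfold Hf
  have total := hlin.sub ((hG.const_mul B).mul hl2)
  refine total.congr_deriv ?_
  unfold H1 Q2
  rw [rpow_split h0 c, rpow_split ht1 d]
  ring

private lemma hasDerivAt_H1 (a b c d B : ℝ) {t : ℝ} (h0 : 0 < t) (h1 : t < 1) :
    HasDerivAt (H1 a b c d B) (H2 a b c d B t) t := by
  have ht1 : (0:ℝ) < 1 - t := by linarith
  have hG := hasDerivAt_G (c - 1) (d - 1) h0 h1
  have h1t : HasDerivAt (fun s : ℝ => 1 - s) (-1) t := by
    exact (hasDerivAt_id' t).const_sub 1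
  have hu : HasDerivAt (fun s : ℝ => c * (1 - s) - d * s) (c * (-1) - d * 1) t :=
    (h1t.const_mul c).sub ((hasDerivAt_id t).const_mul d)
  have hl2 : HasDerivAt (fun s : ℝ => (c - a) - (c + d - a - b) * s)
      (0 - (c + d - a - b) * 1) t :=
    (hasDerivAt_const t (c - a)).sub ((hasDerivAt_id t).const_mul (c + d - a - b))
  have hw : HasDerivAt (fun s : ℝ => s * (1 - s)) (1 * (1 - t) + t * (-1)) t :=
    (hasDerivAt_id t).mul h1t
  have hq2 : HasDerivAt (Q2 a b c d)
      ((c * (-1) - d * 1) * ((c - a) - (c + d - a - b) * t)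
        + (c * (1 - t) - d * t) * (0 - (c + d - a - b) * 1)
        - (c + d - a - b) * (1 * (1 - t) + t * (-1))) t :=
    (hu.mul hl2).sub (hw.const_mul (c + d - a - b))
  unfold H1
  have total := (hasDerivAt_const t (a + b)).sub ((hG.mul hq2).const_mul B)
  refine total.congr_deriv ?_
  unfold H2 Q3 Q2
  rw [rpow_split h0 (c - 1), rpow_split ht1 (d - 1)]
  have e1 : c - 1 - 1 = c - 2 := by ring
  have e2 : d - 1 - 1 = d - 2 := by ring
  rw [e1, e2]
  ring

private lemma Hf_cont0 (a b c d B : ℝ) (hc : 0 < c) : ContinuousAt (Hf a b c d B) 0 := by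
  have c1 : ContinuousAt (fun t : ℝ => t ^ c) 0 :=
    Real.continuousAt_rpow_const 0 c (Or.inr hc.le)
  have c2 : ContinuousAt (fun t : ℝ => (1 - t) ^ d) 0 := by
    have inner : ContinuousAt (fun t : ℝ => 1 - t) 0 :=
      (continuous_const.sub continuous_id).continuousAt
    have outer : ContinuousAt (fun y : ℝ => y ^ d) ((1:ℝ) - 0) :=
      Real.continuousAt_rpow_const (1 - 0) d (Or.inl (by norm_num))
    exact outer.comp inner
  unfold Hf
  exact ((continuousAt_id.const_mul (a + b)).sub continuousAt_const).sub
    ((((c1.mul c2).const_mul B)).mul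
      (continuousAt_const.sub (continuousAt_id.const_mul (c + d - a - b))))

private lemma Hf_zero (a b c d B : ℝ) (hc : 0 < c) : Hf a b c d B 0 = -a := by
  unfold Hf
  rw [Real.zero_rpow hc.ne']
  ring

private lemma F_eq_zero {a b c d A B t : ℝ} (h0 : 0 < t) (h1 : t < 1)
    (hroot : 1 - A * t ^ a * (1 - t) ^ b - B * t ^ c * (1 - t) ^ d = 0) :
    Ff a b c d A B t = 0 := by
  have ht1 : (0:ℝ) < 1 - t := by linarith
  have ea : t ^ (-a) * t ^ a = 1 := by
    rw [← Real.rpow_add h0]; simp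
  have eb : (1 - t) ^ (-b) * (1 - t) ^ b = 1 := by
    rw [← Real.rpow_add ht1]; simp
  have ec : t ^ (c - a) * t ^ a = t ^ c := by
    rw [← Real.rpow_add h0]; congr 1; ring
  have ed : (1 - t) ^ (d - b) * (1 - t) ^ b = (1 - t) ^ d := by
    rw [← Real.rpow_add ht1]; congr 1; ring
  have E1 : t ^ (-a) * (1 - t) ^ (-b) * (t ^ a * (1 - t) ^ b) = 1 := by
    rw [show t ^ (-a) * (1 - t) ^ (-b) * (t ^ a * (1 - t) ^ b)
        = (t ^ (-a) * t ^ a) * ((1 - t) ^ (-b) * (1 - t) ^ b) by ring, ea, eb, mul_one]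
  have E2 : t ^ (c - a) * (1 - t) ^ (d - b) * (t ^ a * (1 - t) ^ b)
      = t ^ c * (1 - t) ^ d := by
    rw [show t ^ (c - a) * (1 - t) ^ (d - b) * (t ^ a * (1 - t) ^ b)
        = (t ^ (c - a) * t ^ a) * ((1 - t) ^ (d - b) * (1 - t) ^ b) by ring, ec, ed]
  have key : Ff a b c d A B t * (t ^ a * (1 - t) ^ b) = 0 := by
    unfold Ff
    linear_combination E1 - B * E2 + hroot
  have hP : t ^ a * (1 - t) ^ b ≠ 0 :=
    (mul_pos (Real.rpow_pos_of_pos h0 a) (Real.rpow_pos_of_pos ht1 b)).ne'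
  exact (mul_eq_zero.mp key).resolve_right hP

private lemma rolle_step {g g' : ℝ → ℝ} {u v : ℝ} (huv : u < v)
    (hu : u ∈ Ioo (0:ℝ) 1) (hv : v ∈ Ioo (0:ℝ) 1)
    (hder : ∀ x ∈ Ioo (0:ℝ) 1, HasDerivAt g (g' x) x)
    (hgu : g u = 0) (hgv : g v = 0) :
    ∃ w, w ∈ Ioo u v ∧ w ∈ Ioo (0:ℝ) 1 ∧ g' w = 0 := by
  have hsub : Icc u v ⊆ Ioo (0:ℝ) 1 := fun x hx =>
    ⟨lt_of_lt_of_le hu.1 hx.1, lt_of_le_of_lt hx.2 hv.2⟩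
  have hcont : ContinuousOn g (Icc u v) := fun x hx =>
    ((hder x (hsub hx)).continuousAt).continuousWithinAt
  obtain ⟨w, hw, hw0⟩ := exists_hasDerivAt_eq_zero huv hcont (by rw [hgu, hgv])
    (fun x hx => hder x (hsub (Ioo_subset_Icc_self hx)))
  exact ⟨w, hw, ⟨lt_trans hu.1 hw.1, lt_trans hw.2 hv.2⟩, hw0⟩

private lemma mvt_step {g g' : ℝ → ℝ} {u v : ℝ} (huv : u < v)
    (hu : u ∈ Ioo (0:ℝ) 1) (hv : v ∈ Ioo (0:ℝ) 1)
    (hder : ∀ x ∈ Ioo (0:ℝ) 1, HasDerivAt g (g' x) x) :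
    ∃ w ∈ Ioo u v, g' w = (g v - g u) / (v - u) := by
  have hsub : Icc u v ⊆ Ioo (0:ℝ) 1 := fun x hx =>
    ⟨lt_of_lt_of_le hu.1 hx.1, lt_of_le_of_lt hx.2 hv.2⟩
  exact exists_hasDerivAt_eq_slope g g' huv
    (fun x hx => ((hder x (hsub hx)).continuousAt).continuousWithinAt)
    (fun x hx => hder x (hsub (Ioo_subset_Icc_self hx)))

set_option maxHeartbeats 1600000 in
private lemma key_lemma (a b c d A B : ℝ) (hB : 0 < B)
    (ha : 0 < a) (hc : 0 < c) (hd : 0 < d)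
    (z : Fin 6 → ℝ) (hz : StrictMono z) (hmem : ∀ i, z i ∈ Ioo (0:ℝ) 1)
    (hroot : ∀ i, 1 - A * (z i) ^ a * (1 - z i) ^ b - B * (z i) ^ c * (1 - z i) ^ d = 0) :
    a + b < c + d := by
  have hFz : ∀ i, Ff a b c d A B (z i) = 0 := fun i =>
    F_eq_zero (hmem i).1 (hmem i).2 (hroot i)
  have hFder : ∀ x ∈ Ioo (0:ℝ) 1, HasDerivAt (Ff a b c d A B)
      (x ^ (-a - 1) * (1 - x) ^ (-b - 1) * Hf a b c d B x) x :=
    fun x hx => hasDerivAt_Ff a b c d A B hx.1 hx.2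
  have hHder : ∀ x ∈ Ioo (0:ℝ) 1, HasDerivAt (Hf a b c d B) (H1 a b c d B x) x :=
    fun x hx => hasDerivAt_Hf a b c d B hx.1 hx.2
  have hH1der : ∀ x ∈ Ioo (0:ℝ) 1, HasDerivAt (H1 a b c d B) (H2 a b c d B x) x :=
    fun x hx => hasDerivAt_H1 a b c d B hx.1 hx.2
  -- Step 1 : five zeros of Hf
  have step1 : ∀ {u v : ℝ}, u < v → u ∈ Ioo (0:ℝ) 1 → v ∈ Ioo (0:ℝ) 1 →
      Ff a b c d A B u = 0 → Ff a b c d A B v = 0 →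
      ∃ w, w ∈ Ioo u v ∧ w ∈ Ioo (0:ℝ) 1 ∧ Hf a b c d B w = 0 := by
    intro u v huv hu hv h0 h1
    obtain ⟨w, hw1, hw2, hw3⟩ := rolle_step huv hu hv hFder h0 h1
    refine ⟨w, hw1, hw2, ?_⟩
    have hpos : 0 < w ^ (-a - 1) * (1 - w) ^ (-b - 1) :=
      mul_pos (Real.rpow_pos_of_pos hw2.1 _)
        (Real.rpow_pos_of_pos (by linarith [hw2.2] : (0:ℝ) < 1 - w) _)
    exact (mul_eq_zero.mp hw3).resolve_left hpos.ne'
  have h01 : z 0 < z 1 := hz (by decide)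
  have h12 : z 1 < z 2 := hz (by decide)
  have h23 : z 2 < z 3 := hz (by decide)
  have h34 : z 3 < z 4 := hz (by decide)
  have h45 : z 4 < z 5 := hz (by decide)
  obtain ⟨w1, hw1i, hw1m, hw1⟩ := step1 h01 (hmem 0) (hmem 1) (hFz 0) (hFz 1)
  obtain ⟨w2, hw2i, hw2m, hw2⟩ := step1 h12 (hmem 1) (hmem 2) (hFz 1) (hFz 2)
  obtain ⟨w3, hw3i, hw3m, hw3⟩ := step1 h23 (hmem 2) (hmem 3) (hFz 2) (hFz 3)
  obtain ⟨w4, hw4i, hw4m, hw4⟩ := step1 h34 (hmem 3) (hmem 4) (hFz 3) (hFz 4)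
  obtain ⟨w5, hw5i, hw5m, hw5⟩ := step1 h45 (hmem 4) (hmem 5) (hFz 4) (hFz 5)
  have hw12 : w1 < w2 := lt_trans hw1i.2 hw2i.1
  have hw23 : w2 < w3 := lt_trans hw2i.2 hw3i.1
  have hw34 : w3 < w4 := lt_trans hw3i.2 hw4i.1
  have hw45 : w4 < w5 := lt_trans hw4i.2 hw5i.1
  -- Step 2 : four zeros of H1
  obtain ⟨y1, hy1i, hy1m, hy1⟩ := rolle_step hw12 hw1m hw2m hHder hw1 hw2
  obtain ⟨y2, hy2i, hy2m, hy2⟩ := rolle_step hw23 hw2m hw3m hHder hw2 hw3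
  obtain ⟨y3, hy3i, hy3m, hy3⟩ := rolle_step hw34 hw3m hw4m hHder hw3 hw4
  obtain ⟨y4, hy4i, hy4m, hy4⟩ := rolle_step hw45 hw4m hw5m hHder hw4 hw5
  have hy12 : y1 < y2 := lt_trans hy1i.2 hy2i.1
  have hy23 : y2 < y3 := lt_trans hy2i.2 hy3i.1
  have hy34 : y3 < y4 := lt_trans hy3i.2 hy4i.1
  -- Step 3 : three zeros of Q3
  have step3 : ∀ {u v : ℝ}, u < v → u ∈ Ioo (0:ℝ) 1 → v ∈ Ioo (0:ℝ) 1 →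
      H1 a b c d B u = 0 → H1 a b c d B v = 0 →
      ∃ w, w ∈ Ioo u v ∧ w ∈ Ioo (0:ℝ) 1 ∧ Q3 a b c d w = 0 := by
    intro u v huv hu hv h0 h1
    obtain ⟨w, hww1, hww2, hww3⟩ := rolle_step huv hu hv hH1der h0 h1
    refine ⟨w, hww1, hww2, ?_⟩
    have hpos : 0 < w ^ (c - 2) * (1 - w) ^ (d - 2) :=
      mul_pos (Real.rpow_pos_of_pos hww2.1 _)
        (Real.rpow_pos_of_pos (by linarith [hww2.2] : (0:ℝ) < 1 - w) _)
    have hB' : -B ≠ 0 := by linarith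
    unfold H2 at hww3
    have := (mul_eq_zero.mp hww3).resolve_left hB'
    exact (mul_eq_zero.mp this).resolve_left hpos.ne'
  obtain ⟨x1, hx1i, hx1m, hx1⟩ := step3 hy12 hy1m hy2m hy1 hy2
  obtain ⟨x2, hx2i, hx2m, hx2⟩ := step3 hy23 hy2m hy3m hy2 hy3
  obtain ⟨x3, hx3i, hx3m, hx3⟩ := step3 hy34 hy3m hy4m hy3 hy4
  have hx12 : x1 < x2 := lt_trans hx1i.2 hx2i.1
  have hx23 : x2 < x3 := lt_trans hx2i.2 hx3i.1
  -- a point t0 near 0 with Hf t0 < 0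
  have hHf0 : Hf a b c d B 0 < 0 := by rw [Hf_zero a b c d B hc]; linarith
  have hev : Hf a b c d B ⁻¹' (Iio 0) ∈ 𝓝 (0:ℝ) :=
    (Hf_cont0 a b c d B hc) (Iio_mem_nhds hHf0)
  obtain ⟨ε, hε, hball⟩ := Metric.mem_nhds_iff.mp hev
  set t0 : ℝ := min (ε / 2) (w1 / 2) with ht0def
  have ht0pos : 0 < t0 := lt_min (by linarith) (by linarith [hw1m.1])
  have ht0w1 : t0 < w1 := lt_of_le_of_lt (min_le_right _ _) (by linarith [hw1m.1])
  have ht0m : t0 ∈ Ioo (0:ℝ) 1 := ⟨ht0pos, lt_trans ht0w1 hw1m.2⟩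
  have ht0neg : Hf a b c d B t0 < 0 := by
    apply hball
    have : |t0 - 0| < ε := by
      rw [sub_zero, abs_of_pos ht0pos]
      exact lt_of_le_of_lt (min_le_left _ _) (by linarith)
    simpa [Metric.mem_ball, Real.dist_eq] using this
  -- MVT : H1 ξ > 0 for some ξ ∈ (t0, w1)
  obtain ⟨ξ, hξi, hξ⟩ := mvt_step ht0w1 ht0m hw1m hHder
  have hξpos : 0 < H1 a b c d B ξ := by
    rw [hξ, hw1]
    apply div_pos (by linarith) (by linarith)
  have hξm : ξ ∈ Ioo (0:ℝ) 1 := ⟨lt_trans ht0pos hξi.1, lt_trans hξi.2 hw1m.2⟩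
  have hξy1 : ξ < y1 := lt_trans hξi.2 hy1i.1
  -- MVT : H2 s < 0 for some s ∈ (ξ, y1)
  obtain ⟨s, hsi, hs⟩ := mvt_step hξy1 hξm hy1m hH1der
  have hsneg : H2 a b c d B s < 0 := by
    rw [hs, hy1]
    apply div_neg_of_neg_of_pos (by linarith) (by linarith)
  have hsm : s ∈ Ioo (0:ℝ) 1 := ⟨lt_trans hξm.1 hsi.1, lt_trans hsi.2 hy1m.2⟩
  -- hence Q3 s > 0
  have hspow : 0 < s ^ (c - 2) * (1 - s) ^ (d - 2) :=
    mul_pos (Real.rpow_pos_of_pos hsm.1 _)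
      (Real.rpow_pos_of_pos (by linarith [hsm.2] : (0:ℝ) < 1 - s) _)
  have hQ3s : 0 < Q3 a b c d s := by
    unfold H2 at hsneg
    have h' : 0 < B * (s ^ (c - 2) * (1 - s) ^ (d - 2)) * Q3 a b c d s := by linarith
    by_contra hcon
    push_neg at hcon
    have h'' : B * (s ^ (c - 2) * (1 - s) ^ (d - 2)) * Q3 a b c d s ≤ 0 :=
      mul_nonpos_of_nonneg_of_nonpos (mul_pos hB hspow).le hcon
    linarith
  -- expand Q3 as an explicit cubic
  set K : ℝ := c + d - a - b with hKdef
  set kap : ℝ := -K * (c + d) * (c + d + 1) with hkapdef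
  set r0 : ℝ := Q3 a b c d 0 with hr0
  set rP : ℝ := Q3 a b c d 1 with hrP
  set rM : ℝ := Q3 a b c d (-1) with hrM
  set r2 : ℝ := (rP + rM) / 2 - r0 with hr2
  set r1 : ℝ := (rP - rM) / 2 - kap with hr1
  have hexp : ∀ t : ℝ, Q3 a b c d t = kap * t ^ 3 + r2 * t ^ 2 + r1 * t + r0 := by
    intro t
    rw [hr2, hr1, hr0, hrP, hrM, hkapdef, hKdef]
    unfold Q3 Q2
    ring
  have e1 : kap * x1 ^ 3 + r2 * x1 ^ 2 + r1 * x1 + r0 = 0 := by rw [← hexp x1]; exact hx1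
  have e2 : kap * x2 ^ 3 + r2 * x2 ^ 2 + r1 * x2 + r0 = 0 := by rw [← hexp x2]; exact hx2
  have e3 : kap * x3 ^ 3 + r2 * x3 ^ 2 + r1 * x3 + r0 = 0 := by rw [← hexp x3]; exact hx3
  have hfac : Q3 a b c d s = kap * (s - x1) * (s - x2) * (s - x3) := by
    rw [hexp s]
    exact cubic_factor kap r2 r1 r0 x1 x2 x3 s hx12 hx23 e1 e2 e3
  have hsx1 : s < x1 := lt_trans hsi.2 hx1i.1
  have hsx2 : s < x2 := lt_trans hsx1 hx12
  have hsx3 : s < x3 := lt_trans hsx2 hx23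
  have hprod : (s - x1) * (s - x2) * (s - x3) < 0 :=
    mul_neg_of_pos_of_neg (mul_pos_of_neg_of_neg (by linarith) (by linarith)) (by linarith)
  have hkap : kap < 0 := by
    rw [hfac] at hQ3s
    by_contra hcon
    push_neg at hcon
    have h'' : kap * ((s - x1) * (s - x2) * (s - x3)) ≤ 0 :=
      mul_nonpos_of_nonneg_of_nonpos hcon hprod.le
    linarith
  -- conclude
  by_contra hcon
  push_neg at hcon
  have h1 : 0 ≤ -K := by rw [hKdef]; linarith
  have h2 : 0 < (c + d) * (c + d + 1) := by positivity
  have h3 : 0 ≤ -K * ((c + d) * (c + d + 1)) := mul_nonneg h1 h2.le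
  rw [hkapdef] at hkap
  linarith

end FewerThanSixAux

/-- Case D: `a, b, c, d > 0`.
If `f(t) = 1 − A t^a (1−t)^b − B t^c (1−t)^d` has no degenerate roots in `(0,1)`
(a root `ζ` is degenerate if `f ζ = 0` and `f' ζ = 0`), then `f` has fewer than 6
roots in `(0,1)`.  (`^` is `Real.rpow`.) -/
theorem fewer_than_six_roots_case_D
    (a b c d A B : ℝ) (hA : 0 < A) (hB : 0 < B)
    (ha : 0 < a) (hb : 0 < b) (hc : 0 < c) (hd : 0 < d)
    (f : ℝ → ℝ)
    (hf : f = fun t : ℝ => 1 - A * t ^ a * (1 - t) ^ b - B * t ^ c * (1 - t) ^ d)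
    (hnd : ∀ t ∈ Set.Ioo (0 : ℝ) 1, f t = 0 → deriv f t ≠ 0) :
    {t ∈ Set.Ioo (0 : ℝ) 1 | f t = 0}.encard < 6 := by
  by_contra hcon
  push_neg at hcon
  obtain ⟨z, hzmono, hzmem⟩ := exists_six_mem hcon
  have hmem : ∀ i, z i ∈ Set.Ioo (0:ℝ) 1 := fun i => (hzmem i).1
  have hroot : ∀ i, 1 - A * (z i) ^ a * (1 - z i) ^ b - B * (z i) ^ c * (1 - z i) ^ d = 0 := by
    intro i
    have := (hzmem i).2
    rw [hf] at this
    exact this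
  have H1 : a + b < c + d :=
    key_lemma a b c d A B hB ha hc hd z hzmono hmem hroot
  have H2 : c + d < a + b := by
    refine key_lemma c d a b B A hA hc ha hb z hzmono hmem ?_
    intro i
    linarith [hroot i]
  linarith
end

section
/- Let A,B > 0 and a,b,c,d ∈ ℝ with a > 0 and b,c,d all negative. If f(t) := 1 − A t^a(1−t)^b − B t^c(1−t)^d has no degenerate roots in (0,1), then f has fewer than 6 roots in the open interval (0,1). -/
open Real Set Polynomial

set_option maxHeartbeats 1000000

private lemma hd_pow (e g : ℝ) {t : ℝ} (ht0 : 0 < t) (ht1 : t < 1) :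
    HasDerivAt (fun t : ℝ => t ^ e * (1 - t) ^ g)
      (t ^ (e-1) * (1-t) ^ (g-1) * (e * (1-t) - g * t)) t := by
  have h1t : (0:ℝ) < 1 - t := by linarith
  have h1 : HasDerivAt (fun x : ℝ => x ^ e) (e * t ^ (e-1)) t :=
    Real.hasDerivAt_rpow_const (Or.inl ht0.ne')
  have hinner : HasDerivAt (fun x : ℝ => 1 - x) (-1) t := (hasDerivAt_id t).const_sub 1
  have h2 : HasDerivAt (fun x : ℝ => (1 - x) ^ g) (g * (1-t) ^ (g-1) * (-1)) t :=
    (Real.hasDerivAt_rpow_const (Or.inl h1t.ne')).comp t hinner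
  have := h1.mul h2
  refine this.congr_deriv ?_
  have he : t ^ e = t ^ (e-1) * t := by
    rw [show e = (e-1)+1 by ring, Real.rpow_add ht0, Real.rpow_one]; ring_nf
  have hg : (1-t) ^ g = (1-t) ^ (g-1) * (1-t) := by
    rw [show g = (g-1)+1 by ring, Real.rpow_add h1t, Real.rpow_one]; ring_nf
  rw [he, hg]; ring

section CaseE

variable {a b c d A B : ℝ}

private lemma hd_f (a b c d A B : ℝ) {t : ℝ} (ht0 : 0 < t) (ht1 : t < 1) :
    HasDerivAt (fun t : ℝ => 1 - A * t ^ a * (1 - t) ^ b - B * t ^ c * (1 - t) ^ d)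
      (-(A * (t ^ (a-1) * (1-t) ^ (b-1) * (a * (1-t) - b * t)))
        - B * (t ^ (c-1) * (1-t) ^ (d-1) * (c * (1-t) - d * t))) t := by
  have h1 := (hd_pow a b ht0 ht1).const_mul A
  have h2 := (hd_pow c d ht0 ht1).const_mul B
  have h3 := ((hasDerivAt_const t (1:ℝ)).sub h1).sub h2
  refine (h3.congr_deriv (by ring)).congr_of_eventuallyEq (Filter.Eventually.of_forall fun y => ?_)
  simp only [Pi.sub_apply]; ring

/-- The auxiliary log function. -/
noncomputable def psi (a b c d A B : ℝ) (t : ℝ) : ℝ :=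
  (a - c) * Real.log t + (b - d) * Real.log (1 - t)
    + Real.log (a - (a+b)*t) - Real.log ((c+d)*t - c) + (Real.log A - Real.log B)

private lemma hP_pos (ha : 0 < a) (hb : b < 0) {t : ℝ} (ht0 : 0 < t) (ht1 : t < 1) :
    0 < a - (a+b)*t := by nlinarith

/-- At any zero of `f'` in `(0,1)`, `psi` vanishes. -/
private lemma psi_eq_zero (hA : 0 < A) (hB : 0 < B)
    (ha : 0 < a) (hb : b < 0) (hc : c < 0) (hd : d < 0) {t : ℝ}
    (ht0 : 0 < t) (ht1 : t < 1)
    (h : -(A * (t ^ (a-1) * (1-t) ^ (b-1) * (a * (1-t) - b * t)))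
        - B * (t ^ (c-1) * (1-t) ^ (d-1) * (c * (1-t) - d * t)) = 0) :
    0 < (c+d)*t - c ∧ psi a b c d A B t = 0 := by
  have h1t : (0:ℝ) < 1 - t := by linarith
  have hP : 0 < a - (a+b)*t := hP_pos ha hb ht0 ht1
  have hr1' : (0:ℝ) < t ^ (a-1) := Real.rpow_pos_of_pos ht0 _
  have hr2' : (0:ℝ) < (1-t) ^ (b-1) := Real.rpow_pos_of_pos h1t _
  have hr3' : (0:ℝ) < t ^ (c-1) := Real.rpow_pos_of_pos ht0 _
  have hr4' : (0:ℝ) < (1-t) ^ (d-1) := Real.rpow_pos_of_pos h1t _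
  have hterm : 0 < a*(1-t) - b*t := by nlinarith
  have hArp : 0 < A * (t ^ (a-1) * (1-t) ^ (b-1) * (a * (1-t) - b * t)) :=
    mul_pos hA (mul_pos (mul_pos hr1' hr2') hterm)
  have hBneg : B * (t ^ (c-1) * (1-t) ^ (d-1) * (c * (1-t) - d * t)) < 0 := by linarith
  have hprodneg : t ^ (c-1) * (1-t) ^ (d-1) * (c * (1-t) - d * t) < 0 := by
    rcases mul_neg_iff.mp hBneg with ⟨_, h2⟩ | ⟨h1, _⟩
    · exact h2
    · linarith
  have hR : 0 < (c+d)*t - c := by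
    rcases mul_neg_iff.mp hprodneg with ⟨_, h2⟩ | ⟨h1, _⟩
    · linarith
    · nlinarith [mul_pos hr3' hr4']
  have key : A * (t ^ (a-1) * ((1-t) ^ (b-1) * (a - (a+b)*t)))
      = B * (t ^ (c-1) * ((1-t) ^ (d-1) * ((c+d)*t - c))) := by
    have e1 : a * (1-t) - b * t = a - (a+b)*t := by ring
    have e2 : c * (1-t) - d * t = -((c+d)*t - c) := by ring
    rw [e1, e2] at h
    nlinarith [h]
  have hlog := congrArg Real.log key
  have hr1 : (0:ℝ) < t ^ (a-1) := Real.rpow_pos_of_pos ht0 _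
  have hr2 : (0:ℝ) < (1-t) ^ (b-1) := Real.rpow_pos_of_pos h1t _
  have hr3 : (0:ℝ) < t ^ (c-1) := Real.rpow_pos_of_pos ht0 _
  have hr4 : (0:ℝ) < (1-t) ^ (d-1) := Real.rpow_pos_of_pos h1t _
  rw [Real.log_mul hA.ne' (by positivity), Real.log_mul hr1.ne' (by positivity),
      Real.log_mul hr2.ne' hP.ne',
      Real.log_mul hB.ne' (by positivity), Real.log_mul hr3.ne' (by positivity),
      Real.log_mul hr4.ne' hR.ne',
      Real.log_rpow ht0, Real.log_rpow h1t, Real.log_rpow ht0, Real.log_rpow h1t] at hlog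
  refine ⟨hR, ?_⟩
  unfold psi
  linarith [hlog]

private lemma hd_psi (ha : 0 < a) (hb : b < 0) (hc : c < 0) (hd : d < 0) {t : ℝ}
    (ht0 : 0 < t) (ht1 : t < 1) (hR : 0 < (c+d)*t - c) :
    HasDerivAt (psi a b c d A B)
      ((a-c) * t⁻¹ + (b-d) * ((-1)/(1-t)) + (-(a+b))/(a-(a+b)*t) - (c+d)/((c+d)*t-c)) t := by
  have h1t : (0:ℝ) < 1 - t := by linarith
  have hP : 0 < a - (a+b)*t := hP_pos ha hb ht0 ht1
  have d1 : HasDerivAt (fun x : ℝ => (a-c) * Real.log x) ((a-c) * t⁻¹) t :=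
    (Real.hasDerivAt_log ht0.ne').const_mul _
  have d2 : HasDerivAt (fun x : ℝ => (b-d) * Real.log (1 - x)) ((b-d) * ((-1)/(1-t))) t := by
    have hinner : HasDerivAt (fun x : ℝ => 1 - x) (-1) t := (hasDerivAt_id t).const_sub 1
    exact (hinner.log h1t.ne').const_mul _
  have d3 : HasDerivAt (fun x : ℝ => Real.log (a - (a+b)*x)) ((-(a+b))/(a-(a+b)*t)) t := by
    have hinner : HasDerivAt (fun x : ℝ => a - (a+b)*x) (-(a+b)) t := by
      simpa using ((hasDerivAt_id t).const_mul (a+b)).const_sub a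
    exact hinner.log hP.ne'
  have d4 : HasDerivAt (fun x : ℝ => Real.log ((c+d)*x - c)) ((c+d)/((c+d)*t-c)) t := by
    have hinner : HasDerivAt (fun x : ℝ => (c+d)*x - c) (c+d) t := by
      simpa using ((hasDerivAt_id t).const_mul (c+d)).sub_const c
    exact hinner.log hR.ne'
  exact (((d1.add d2).add d3).sub d4).add_const _

end CaseE


noncomputable def pE (a b c d : ℝ) : Polynomial ℝ :=
  C (a-c) * ((1-X) * (C a - C (a+b) * X) * (C (c+d) * X - C c))
  - C (b-d) * (X * (C a - C (a+b) * X) * (C (c+d) * X - C c))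
  - C (a+b) * (X * (1-X) * (C (c+d) * X - C c))
  - C (c+d) * (X * (1-X) * (C a - C (a+b) * X))

lemma natDegree_pE (a b c d : ℝ) : (pE a b c d).natDegree ≤ 3 := by
  unfold pE; compute_degree

lemma pE_ne_zero {a b c d : ℝ} (ha : 0 < a) (hc : c < 0) : pE a b c d ≠ 0 := by
  intro h
  have h0 : (pE a b c d).eval 0 = (a-c)*a*(-c) := by simp [pE]; ring
  rw [h, eval_zero] at h0
  have : 0 < (a - c) * a * -c :=
    mul_pos (mul_pos (by linarith) ha) (by linarith)
  linarith

lemma pE_eval_zero {a b c d t : ℝ} (ht0 : t ≠ 0) (h1t : (1:ℝ) - t ≠ 0)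
    (hP : a - (a+b)*t ≠ 0) (hR : (c+d)*t - c ≠ 0)
    (hz : (a-c) * t⁻¹ + (b-d) * ((-1)/(1-t)) + (-(a+b))/(a-(a+b)*t) - (c+d)/((c+d)*t-c) = 0) :
    (pE a b c d).eval t = 0 := by
  have i1 : t * t⁻¹ = 1 := mul_inv_cancel₀ ht0
  have i2 : (1-t) * (1-t)⁻¹ = 1 := mul_inv_cancel₀ h1t
  have i3 : (a-(a+b)*t) * (a-(a+b)*t)⁻¹ = 1 := mul_inv_cancel₀ hP
  have i4 : ((c+d)*t-c) * ((c+d)*t-c)⁻¹ = 1 := mul_inv_cancel₀ hR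
  simp only [pE, eval_sub, eval_mul, eval_add, eval_one, eval_C, eval_X]
  linear_combination (t*(1-t)*(a-(a+b)*t)*((c+d)*t-c)) * hz
    - (a-c)*(1-t)*(a-(a+b)*t)*((c+d)*t-c) * i1
    + (b-d)*t*(a-(a+b)*t)*((c+d)*t-c) * i2
    + (a+b)*t*(1-t)*((c+d)*t-c) * i3
    + (c+d)*t*(1-t)*(a-(a+b)*t) * i4


lemma six_points {s : Set ℝ} (h : 6 ≤ s.encard) : ∃ x : Fin 6 → ℝ, StrictMono x ∧ ∀ i, x i ∈ s := by
  obtain ⟨t, hts, ht⟩ := Set.exists_subset_encard_eq h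
  have hfin : t.Finite := Set.finite_of_encard_eq_coe (by exact_mod_cast ht)
  have hcard : hfin.toFinset.card = 6 := by
    have := hfin.encard_eq_coe_toFinset_card
    rw [ht] at this
    exact_mod_cast this.symm
  set e := hfin.toFinset.orderIsoOfFin hcard with he
  refine ⟨fun i => (e i : ℝ), fun i j hij => ?_, fun i => ?_⟩
  · exact_mod_cast (e.lt_iff_lt.mpr hij)
  · exact hts (hfin.mem_toFinset.mp (e i).2)

lemma four_roots_false' {p : Polynomial ℝ} (hp : p ≠ 0) (hdeg : p.natDegree ≤ 3)
    {z0 z1 z2 z3 : ℝ} (h01 : z0 < z1) (h12 : z1 < z2) (h23 : z2 < z3)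
    (e0 : p.eval z0 = 0) (e1 : p.eval z1 = 0) (e2 : p.eval z2 = 0) (e3 : p.eval z3 = 0) :
    False := by
  have hsub : ({z0, z1, z2, z3} : Finset ℝ) ⊆ p.roots.toFinset := by
    intro w hw
    rw [Multiset.mem_toFinset, Polynomial.mem_roots hp]
    simp only [Finset.mem_insert, Finset.mem_singleton] at hw
    rcases hw with rfl | rfl | rfl | rfl <;> assumption
  have n01 : z0 ≠ z1 := ne_of_lt h01
  have n02 : z0 ≠ z2 := ne_of_lt (h01.trans h12)
  have n03 : z0 ≠ z3 := ne_of_lt ((h01.trans h12).trans h23)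
  have n12 : z1 ≠ z2 := ne_of_lt h12
  have n13 : z1 ≠ z3 := ne_of_lt (h12.trans h23)
  have n23 : z2 ≠ z3 := ne_of_lt h23
  have hcard : ({z0, z1, z2, z3} : Finset ℝ).card = 4 := by
    simp [Finset.card_insert_of_notMem, Finset.mem_insert, Finset.mem_singleton,
      n01, n02, n03, n12, n13, n23]
  have h1 := Finset.card_le_card hsub
  have h2 := p.roots.toFinset_card_le
  have h3 := p.card_roots'
  omega


/-- Case E: `a > 0` and `b, c, d < 0`.
If `f(t) = 1 − A t^a (1−t)^b − B t^c (1−t)^d` has no degenerate roots in `(0,1)`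
(a root `ζ` is degenerate if `f ζ = 0` and `f' ζ = 0`), then `f` has fewer than 6
roots in `(0,1)`.  (`^` is `Real.rpow`.) -/
theorem fewer_than_six_roots_case_E
    (a b c d A B : ℝ) (hA : 0 < A) (hB : 0 < B)
    (ha : 0 < a) (hb : b < 0) (hc : c < 0) (hd : d < 0)
    (f : ℝ → ℝ)
    (hf : f = fun t : ℝ => 1 - A * t ^ a * (1 - t) ^ b - B * t ^ c * (1 - t) ^ d)
    (hnd : ∀ t ∈ Set.Ioo (0 : ℝ) 1, f t = 0 → deriv f t ≠ 0) :
    {t ∈ Set.Ioo (0 : ℝ) 1 | f t = 0}.encard < 6 := by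
  by_contra hcon
  push_neg at hcon
  obtain ⟨x, hxmono, hxmem⟩ := six_points hcon
  simp only [Set.mem_setOf_eq, Set.mem_Ioo] at hxmem
  set Df : ℝ → ℝ := fun t => -(A * (t ^ (a-1) * (1-t) ^ (b-1) * (a * (1-t) - b * t)))
      - B * (t ^ (c-1) * (1-t) ^ (d-1) * (c * (1-t) - d * t)) with hDf
  have hfd : ∀ t : ℝ, 0 < t → t < 1 → HasDerivAt f (Df t) t := by
    intro t ht0 ht1
    rw [hf]; exact hd_f a b c d A B ht0 ht1
  have rolle1 : ∀ u v : ℝ, 0 < u → u < v → v < 1 → f u = 0 → f v = 0 →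
      ∃ y, u < y ∧ y < v ∧ Df y = 0 := by
    intro u v hu huv hv hfu hfv
    have hcont : ContinuousOn f (Set.Icc u v) := by
      intro t ht
      exact (hfd t (lt_of_lt_of_le hu ht.1)
        (lt_of_le_of_lt ht.2 hv)).continuousAt.continuousWithinAt
    obtain ⟨y, hy, hy'⟩ := exists_deriv_eq_zero huv hcont (hfu.trans hfv.symm)
    refine ⟨y, hy.1, hy.2, ?_⟩
    rw [← (hfd y (hu.trans hy.1) (hy.2.trans hv)).deriv]
    exact hy'
  have rolle2 : ∀ u v : ℝ, 0 < u → u < v → v < 1 → 0 < (c+d)*v - c →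
      psi a b c d A B u = 0 → psi a b c d A B v = 0 →
      ∃ z, u < z ∧ z < v ∧ (pE a b c d).eval z = 0 := by
    intro u v hu huv hv hRv hpu hpv
    have hRt : ∀ t ∈ Set.Icc u v, 0 < (c+d)*t - c := by
      intro t ht
      nlinarith [mul_le_mul_of_nonpos_left ht.2 (show c + d ≤ 0 by linarith)]
    have hcont : ContinuousOn (psi a b c d A B) (Set.Icc u v) := by
      intro t ht
      exact (hd_psi ha hb hc hd (lt_of_lt_of_le hu ht.1) (lt_of_le_of_lt ht.2 hv)
        (hRt t ht)).continuousAt.continuousWithinAt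
    obtain ⟨z, hz, hz'⟩ := exists_deriv_eq_zero huv hcont (hpu.trans hpv.symm)
    have hz0 : 0 < z := hu.trans hz.1
    have hz1 : z < 1 := hz.2.trans hv
    have hRz := hRt z ⟨hz.1.le, hz.2.le⟩
    have hPz := hP_pos ha hb hz0 hz1
    have hder : (a-c) * z⁻¹ + (b-d) * ((-1)/(1-z)) + (-(a+b))/(a-(a+b)*z)
        - (c+d)/((c+d)*z-c) = 0 := by
      rw [← (hd_psi ha hb hc hd hz0 hz1 hRz).deriv]
      exact hz'
    exact ⟨z, hz.1, hz.2,
      pE_eval_zero hz0.ne' (by linarith) hPz.ne' hRz.ne' hder⟩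
  -- the six roots
  have m0 := hxmem 0; have m1 := hxmem 1; have m2 := hxmem 2
  have m3 := hxmem 3; have m4 := hxmem 4; have m5 := hxmem 5
  have h01 : x 0 < x 1 := hxmono (by decide)
  have h12 : x 1 < x 2 := hxmono (by decide)
  have h23 : x 2 < x 3 := hxmono (by decide)
  have h34 : x 3 < x 4 := hxmono (by decide)
  have h45 : x 4 < x 5 := hxmono (by decide)
  obtain ⟨y0, hy0l, hy0r, hDy0⟩ := rolle1 _ _ m0.1.1 h01 m1.1.2 m0.2 m1.2
  obtain ⟨y1, hy1l, hy1r, hDy1⟩ := rolle1 _ _ m1.1.1 h12 m2.1.2 m1.2 m2.2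
  obtain ⟨y2, hy2l, hy2r, hDy2⟩ := rolle1 _ _ m2.1.1 h23 m3.1.2 m2.2 m3.2
  obtain ⟨y3, hy3l, hy3r, hDy3⟩ := rolle1 _ _ m3.1.1 h34 m4.1.2 m3.2 m4.2
  obtain ⟨y4, hy4l, hy4r, hDy4⟩ := rolle1 _ _ m4.1.1 h45 m5.1.2 m4.2 m5.2
  have hy00 : 0 < y0 := m0.1.1.trans hy0l
  have hy10 : 0 < y1 := m1.1.1.trans hy1l
  have hy20 : 0 < y2 := m2.1.1.trans hy2l
  have hy30 : 0 < y3 := m3.1.1.trans hy3l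
  have hy40 : 0 < y4 := m4.1.1.trans hy4l
  have hy01 : y0 < 1 := hy0r.trans m1.1.2
  have hy11 : y1 < 1 := hy1r.trans m2.1.2
  have hy21 : y2 < 1 := hy2r.trans m3.1.2
  have hy31 : y3 < 1 := hy3r.trans m4.1.2
  have hy41 : y4 < 1 := hy4r.trans m5.1.2
  obtain ⟨hR0, hp0⟩ := psi_eq_zero hA hB ha hb hc hd hy00 hy01 hDy0
  obtain ⟨hR1, hp1⟩ := psi_eq_zero hA hB ha hb hc hd hy10 hy11 hDy1
  obtain ⟨hR2, hp2⟩ := psi_eq_zero hA hB ha hb hc hd hy20 hy21 hDy2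
  obtain ⟨hR3, hp3⟩ := psi_eq_zero hA hB ha hb hc hd hy30 hy31 hDy3
  obtain ⟨hR4, hp4⟩ := psi_eq_zero hA hB ha hb hc hd hy40 hy41 hDy4
  have hyy01 : y0 < y1 := hy0r.trans hy1l
  have hyy12 : y1 < y2 := hy1r.trans hy2l
  have hyy23 : y2 < y3 := hy2r.trans hy3l
  have hyy34 : y3 < y4 := hy3r.trans hy4l
  obtain ⟨z0, hz0l, hz0r, he0⟩ := rolle2 _ _ hy00 hyy01 hy11 hR1 hp0 hp1
  obtain ⟨z1, hz1l, hz1r, he1⟩ := rolle2 _ _ hy10 hyy12 hy21 hR2 hp1 hp2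
  obtain ⟨z2, hz2l, hz2r, he2⟩ := rolle2 _ _ hy20 hyy23 hy31 hR3 hp2 hp3
  obtain ⟨z3, hz3l, hz3r, he3⟩ := rolle2 _ _ hy30 hyy34 hy41 hR4 hp3 hp4
  exact four_roots_false' (pE_ne_zero ha hc) (natDegree_pE a b c d)
    (hz0r.trans hz1l) (hz1r.trans hz2l) (hz2r.trans hz3l) he0 he1 he2 he3
end
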